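/- For the two-qubit CNOT random unitary operation Φ(ρ) = p·C₁ρC₁ + (1−p)·C₂ρC₂ with 0 < p < 1, the eigenspace of Φ for the eigenvalue 1 has complex dimension 5, and the eigenspace for the eigenvalue −1 has complex dimension 1. -/

import Mathlib

open Matrix BigOperators

private lemma cancel19 {c a b : ℂ} (hc : c ≠ 0) (h : c * (a - b) = 0) : a = b := by
  rcases mul_eq_zero.mp h with h' | h'
  · exact absurd h' hc
  · exact sub_eq_zero.mp h'

private def bb19 : Fin 5 → Matrix (Fin 4) (Fin 4) ℂ := ![
  !![1,0,0,0; 0,0,0,0; 0,0,0,0; 0,0,0,0],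
  !![0,1,1,1; 0,0,0,0; 0,0,0,0; 0,0,0,0],
  !![0,0,0,0; 1,0,0,0; 1,0,0,0; 1,0,0,0],
  !![0,0,0,0; 0,1,0,0; 0,0,1,0; 0,0,0,1],
  !![0,0,0,0; 0,0,1,1; 0,1,0,1; 0,1,1,0]]

private def AA19 : Matrix (Fin 4) (Fin 4) ℂ := !![0,0,0,0; 0,0,1,-1; 0,-1,0,1; 0,1,-1,0]

private lemma conj19a (ρ : Matrix (Fin 4) (Fin 4) ℂ) :
    (!![1,0,0,0; 0,1,0,0; 0,0,0,1; 0,0,1,0] : Matrix (Fin 4) (Fin 4) ℂ) * ρ *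
      !![1,0,0,0; 0,1,0,0; 0,0,0,1; 0,0,1,0] =
    !![ρ 0 0, ρ 0 1, ρ 0 3, ρ 0 2;
       ρ 1 0, ρ 1 1, ρ 1 3, ρ 1 2;
       ρ 3 0, ρ 3 1, ρ 3 3, ρ 3 2;
       ρ 2 0, ρ 2 1, ρ 2 3, ρ 2 2] := by
  ext i j
  fin_cases i <;> fin_cases j <;>
    simp [Matrix.mul_apply, Matrix.vecMul, dotProduct, Fin.sum_univ_four,
      Matrix.vecHead, Matrix.vecTail]

private lemma conj19b (ρ : Matrix (Fin 4) (Fin 4) ℂ) :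
    (!![1,0,0,0; 0,0,0,1; 0,0,1,0; 0,1,0,0] : Matrix (Fin 4) (Fin 4) ℂ) * ρ *
      !![1,0,0,0; 0,0,0,1; 0,0,1,0; 0,1,0,0] =
    !![ρ 0 0, ρ 0 3, ρ 0 2, ρ 0 1;
       ρ 3 0, ρ 3 3, ρ 3 2, ρ 3 1;
       ρ 2 0, ρ 2 3, ρ 2 2, ρ 2 1;
       ρ 1 0, ρ 1 3, ρ 1 2, ρ 1 1] := by
  ext i j
  fin_cases i <;> fin_cases j <;>
    simp [Matrix.mul_apply, Matrix.vecMul, dotProduct, Fin.sum_univ_four,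
      Matrix.vecHead, Matrix.vecTail]

set_option maxHeartbeats 4000000 in
theorem stmt_19 (p : ℝ) (hp0 : 0 < p) (hp1 : p < 1)
    (C₁ C₂ : Matrix (Fin 4) (Fin 4) ℂ)
    -- C₁ : |i,j⟩ ↦ |i, i⊕j⟩ swaps |10⟩ and |11⟩ (basis order |00⟩,|01⟩,|10⟩,|11⟩)
    (hC₁ : C₁ = !![1,0,0,0; 0,1,0,0; 0,0,0,1; 0,0,1,0])
    -- C₂ : |i,j⟩ ↦ |i⊕j, j⟩ swaps |01⟩ and |11⟩
    (hC₂ : C₂ = !![1,0,0,0; 0,0,0,1; 0,0,1,0; 0,1,0,0])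
    (Φ : Module.End ℂ (Matrix (Fin 4) (Fin 4) ℂ))
    (hΦ : ∀ ρ, Φ ρ = (p : ℂ) • (C₁ * ρ * C₁) + ((1 - p : ℝ) : ℂ) • (C₂ * ρ * C₂)) :
    Module.finrank ℂ (Module.End.eigenspace Φ 1) = 5 ∧
      Module.finrank ℂ (Module.End.eigenspace Φ (-1)) = 1 := by
  subst hC₁ hC₂
  have hq0 : (p : ℂ) ≠ 0 := by
    exact_mod_cast hp0.ne'
  have hq1 : (1 : ℂ) - (p : ℂ) ≠ 0 := by
    have h : (1 - p : ℝ) ≠ 0 := by linarith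
    exact_mod_cast h
  have hq2 : (2 : ℂ) - (p : ℂ) ≠ 0 := by
    have h : (2 - p : ℝ) ≠ 0 := by linarith
    exact_mod_cast h
  have h6q : (6 : ℂ) * (p : ℂ) ≠ 0 := mul_ne_zero (by norm_num) hq0
  constructor
  · -- eigenvalue 1
    have hli : LinearIndependent ℂ bb19 := by
      rw [Fintype.linearIndependent_iff]
      intro g hg
      rw [Fin.sum_univ_five] at hg
      have t0 := congrFun (congrFun hg 0) 0
      have t1 := congrFun (congrFun hg 0) 1
      have t2 := congrFun (congrFun hg 1) 0
      have t3 := congrFun (congrFun hg 1) 1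
      have t4 := congrFun (congrFun hg 1) 2
      simp [bb19] at t0 t1 t2 t3 t4
      intro i
      fin_cases i <;> assumption
    have hspan : Module.End.eigenspace Φ 1 = Submodule.span ℂ (Set.range bb19) := by
      apply le_antisymm
      · intro ρ hρ
        rw [Module.End.mem_eigenspace_iff, one_smul] at hρ
        have h' := (hΦ ρ).symm.trans hρ
        rw [conj19a, conj19b] at h'
        have E01 := congrFun (congrFun h' 0) 1
        have E02 := congrFun (congrFun h' 0) 2
        have E10 := congrFun (congrFun h' 1) 0
        have E20 := congrFun (congrFun h' 2) 0
        have E11 := congrFun (congrFun h' 1) 1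
        have E22 := congrFun (congrFun h' 2) 2
        have E12 := congrFun (congrFun h' 1) 2
        have E13 := congrFun (congrFun h' 1) 3
        have E21 := congrFun (congrFun h' 2) 1
        have E23 := congrFun (congrFun h' 2) 3
        have E31 := congrFun (congrFun h' 3) 1
        have E32 := congrFun (congrFun h' 3) 2
        simp [Matrix.vecHead, Matrix.vecTail] at E01 E02 E10 E20 E11 E22 E12 E13 E21 E23 E31 E32
        have hr1 : ρ 0 3 = ρ 0 1 := cancel19 hq1 (by linear_combination E01)
        have hr2 : ρ 0 2 = ρ 0 1 := (cancel19 hq0 (by linear_combination -E02)).trans hr1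
        have hc1 : ρ 3 0 = ρ 1 0 := cancel19 hq1 (by linear_combination E10)
        have hc2 : ρ 2 0 = ρ 1 0 := (cancel19 hq0 (by linear_combination -E20)).trans hc1
        have hd1 : ρ 3 3 = ρ 1 1 := cancel19 hq1 (by linear_combination E11)
        have hd2 : ρ 2 2 = ρ 1 1 := (cancel19 hq0 (by linear_combination -E22)).trans hd1
        have h1 : ((1:ℂ)+p) * (ρ 1 2 - ρ 1 3) + ((1:ℂ)-p) * (ρ 3 1 - ρ 3 2) = 0 := by
          linear_combination E13 - E12
        have h2 : (p:ℂ) * (ρ 2 1 - ρ 2 3) - ((1:ℂ)-p) * (ρ 1 2 - ρ 1 3) - (ρ 3 1 - ρ 3 2) = 0 := by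
          linear_combination E31 - E32
        have h3 : (p:ℂ) * (ρ 3 1 - ρ 3 2) - ((2:ℂ)-p) * (ρ 2 1 - ρ 2 3) = 0 := by
          linear_combination E21 - E23
        have hXb : ρ 1 2 = ρ 1 3 :=
          cancel19 h6q (by linear_combination ((p:ℂ)+2)*h1 + ((2:ℂ)-p)*h2 + (p:ℂ)*h3)
        have hY : ρ 3 1 = ρ 3 2 := cancel19 hq1 (by linear_combination h1 - ((1:ℂ)+p)*hXb)
        have hF : ρ 3 2 = ρ 1 2 := cancel19 hq1 (by linear_combination E12 + (p:ℂ)*hXb)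
        have hE3 : ρ 3 1 = ρ 1 2 := hY.trans hF
        have hD : ρ 2 3 = ρ 1 2 := cancel19 hq0 (by linear_combination E32 + hF)
        have hCC : ρ 2 1 = ρ 1 2 :=
          (cancel19 hq2 (by linear_combination (p:ℂ)*hY - h3)).trans hD
        rw [Submodule.mem_span_range_iff_exists_fun]
        refine ⟨![ρ 0 0, ρ 0 1, ρ 1 0, ρ 1 1, ρ 1 2], ?_⟩
        rw [Fin.sum_univ_five]
        ext i j
        fin_cases i <;> fin_cases j <;>
          simp [bb19, Matrix.vecHead, Matrix.vecTail] <;>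
          first
            | rfl
            | exact hr1.symm | exact hr2.symm | exact hc1.symm | exact hc2.symm
            | exact hd1.symm | exact hd2.symm
            | exact hXb | exact hXb.symm
            | exact hF.symm | exact hE3.symm | exact hD.symm | exact hCC.symm
            | exact hr1 | exact hr2 | exact hc1 | exact hc2 | exact hd1 | exact hd2
            | exact hF | exact hE3 | exact hD | exact hCC
      · rw [Submodule.span_le]
        rintro x ⟨i, rfl⟩
        have hc : ((p:ℂ) + ((1 - p : ℝ):ℂ)) = 1 := by push_cast; ring
        have key : ∀ B : Matrix (Fin 4) (Fin 4) ℂ,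
            ((!![1,0,0,0; 0,1,0,0; 0,0,0,1; 0,0,1,0] : Matrix (Fin 4) (Fin 4) ℂ) * B *
              !![1,0,0,0; 0,1,0,0; 0,0,0,1; 0,0,1,0] = B) →
            ((!![1,0,0,0; 0,0,0,1; 0,0,1,0; 0,1,0,0] : Matrix (Fin 4) (Fin 4) ℂ) * B *
              !![1,0,0,0; 0,0,0,1; 0,0,1,0; 0,1,0,0] = B) →
            B ∈ Module.End.eigenspace Φ 1 := by
          intro B k1 k2
          rw [Module.End.mem_eigenspace_iff, one_smul, hΦ, k1, k2, ← add_smul, hc, one_smul]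
        fin_cases i
        · refine key _ ?_ ?_
          · rw [conj19a]
            ext r s
            fin_cases r <;> fin_cases s <;> simp [bb19, Matrix.vecHead, Matrix.vecTail]
          · rw [conj19b]
            ext r s
            fin_cases r <;> fin_cases s <;> simp [bb19, Matrix.vecHead, Matrix.vecTail]
        · refine key _ ?_ ?_
          · rw [conj19a]
            ext r s
            fin_cases r <;> fin_cases s <;> simp [bb19, Matrix.vecHead, Matrix.vecTail]
          · rw [conj19b]
            ext r s
            fin_cases r <;> fin_cases s <;> simp [bb19, Matrix.vecHead, Matrix.vecTail]
        · refine key _ ?_ ?_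
          · rw [conj19a]
            ext r s
            fin_cases r <;> fin_cases s <;> simp [bb19, Matrix.vecHead, Matrix.vecTail]
          · rw [conj19b]
            ext r s
            fin_cases r <;> fin_cases s <;> simp [bb19, Matrix.vecHead, Matrix.vecTail]
        · refine key _ ?_ ?_
          · rw [conj19a]
            ext r s
            fin_cases r <;> fin_cases s <;> simp [bb19, Matrix.vecHead, Matrix.vecTail]
          · rw [conj19b]
            ext r s
            fin_cases r <;> fin_cases s <;> simp [bb19, Matrix.vecHead, Matrix.vecTail]
        · refine key _ ?_ ?_
          · rw [conj19a]
            ext r s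
            fin_cases r <;> fin_cases s <;> simp [bb19, Matrix.vecHead, Matrix.vecTail]
          · rw [conj19b]
            ext r s
            fin_cases r <;> fin_cases s <;> simp [bb19, Matrix.vecHead, Matrix.vecTail]
    rw [hspan, finrank_span_eq_card hli]
    simp
  · -- eigenvalue -1
    have hA0 : AA19 ≠ 0 := by
      intro h
      have := congrFun (congrFun h 1) 2
      simp [AA19] at this
    have hspan : Module.End.eigenspace Φ (-1) = Submodule.span ℂ {AA19} := by
      apply le_antisymm
      · intro ρ hρ
        rw [Module.End.mem_eigenspace_iff] at hρ
        have h' := (hΦ ρ).symm.trans hρ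
        rw [conj19a, conj19b] at h'
        have E00 := congrFun (congrFun h' 0) 0
        have E01 := congrFun (congrFun h' 0) 1
        have E02 := congrFun (congrFun h' 0) 2
        have E03 := congrFun (congrFun h' 0) 3
        have E10 := congrFun (congrFun h' 1) 0
        have E20 := congrFun (congrFun h' 2) 0
        have E30 := congrFun (congrFun h' 3) 0
        have E11 := congrFun (congrFun h' 1) 1
        have E22 := congrFun (congrFun h' 2) 2
        have E33 := congrFun (congrFun h' 3) 3
        have E12 := congrFun (congrFun h' 1) 2
        have E13 := congrFun (congrFun h' 1) 3
        have E21 := congrFun (congrFun h' 2) 1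
        have E23 := congrFun (congrFun h' 2) 3
        have E31 := congrFun (congrFun h' 3) 1
        have E32 := congrFun (congrFun h' 3) 2
        simp [Matrix.vecHead, Matrix.vecTail] at E00 E01 E02 E03 E10 E20 E30 E11
        simp [Matrix.vecHead, Matrix.vecTail] at E22 E33 E12 E13 E21 E23 E31 E32
        have h00 : ρ 0 0 = 0 := cancel19 two_ne_zero (by linear_combination E00)
        have h01 : ρ 0 1 = 0 :=
          cancel19 h6q (by linear_combination ((p:ℂ)+2)*E01 + (p:ℂ)*E02 + ((p:ℂ)-2)*E03)
        have h03 : ρ 0 3 = 0 := cancel19 hq1 (by linear_combination E01 - ((1:ℂ)+p)*h01)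
        have h02 : ρ 0 2 = 0 := cancel19 hq2 (by linear_combination E02 - (p:ℂ)*h03)
        have h10 : ρ 1 0 = 0 :=
          cancel19 h6q (by linear_combination ((p:ℂ)+2)*E10 + (p:ℂ)*E20 + ((p:ℂ)-2)*E30)
        have h30 : ρ 3 0 = 0 := cancel19 hq1 (by linear_combination E10 - ((1:ℂ)+p)*h10)
        have h20 : ρ 2 0 = 0 := cancel19 hq2 (by linear_combination E20 - (p:ℂ)*h30)
        have h11 : ρ 1 1 = 0 :=
          cancel19 h6q (by linear_combination ((p:ℂ)+2)*E11 + (p:ℂ)*E22 + ((p:ℂ)-2)*E33)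
        have h33 : ρ 3 3 = 0 := cancel19 hq1 (by linear_combination E11 - ((1:ℂ)+p)*h11)
        have h22 : ρ 2 2 = 0 := cancel19 hq2 (by linear_combination E22 - (p:ℂ)*h33)
        have hS1 : ρ 1 2 + ρ 1 3 = 0 :=
          cancel19 h6q (by linear_combination ((p:ℂ)+2)*E12 + ((p:ℂ)+2)*E13 + (p:ℂ)*E21 + (p:ℂ)*E23 + ((p:ℂ)-2)*E31 + ((p:ℂ)-2)*E32)
        have hS3 : ρ 3 1 + ρ 3 2 = 0 :=
          cancel19 hq1 (by linear_combination E12 + E13 - ((1:ℂ)+p)*hS1)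
        have hS2 : ρ 2 1 + ρ 2 3 = 0 :=
          cancel19 hq2 (by linear_combination E21 + E23 - (p:ℂ)*hS3)
        have hXY : ρ 1 2 - ρ 1 3 = ρ 3 1 - ρ 3 2 :=
          cancel19 hq1 (by linear_combination E12 - E13)
        have hYZ : ρ 3 1 - ρ 3 2 = -(ρ 2 1 - ρ 2 3) :=
          cancel19 hq0 (by linear_combination E21 - E23)
        have hb : ρ 1 3 = -ρ 1 2 := by linear_combination hS1
        have he : ρ 3 1 = ρ 1 2 :=
          cancel19 two_ne_zero (by linear_combination hS3 - hXY - hS1)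
        have hf2 : ρ 3 2 = -ρ 1 2 := by linear_combination hS3 - he
        have hcz : ρ 2 1 = -ρ 1 2 :=
          cancel19 two_ne_zero (by linear_combination hS1 + hS2 + hXY + hYZ)
        have hdz : ρ 2 3 = ρ 1 2 := by linear_combination hS2 - hcz
        rw [Submodule.mem_span_singleton]
        refine ⟨ρ 1 2, ?_⟩
        ext i j
        fin_cases i <;> fin_cases j <;>
          simp [AA19, Matrix.vecHead, Matrix.vecTail] <;>
          first
            | rfl
            | exact h00.symm | exact h01.symm | exact h02.symm | exact h03.symm
            | exact h10.symm | exact h20.symm | exact h30.symm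
            | exact h11.symm | exact h22.symm | exact h33.symm
            | exact hb.symm | exact he.symm | exact hf2.symm | exact hcz.symm | exact hdz.symm
            | exact hb | exact he | exact hf2 | exact hcz | exact hdz
      · rw [Submodule.span_le, Set.singleton_subset_iff]
        rw [SetLike.mem_coe, Module.End.mem_eigenspace_iff, hΦ]
        have hc : ((p:ℂ) + ((1 - p : ℝ):ℂ)) = 1 := by push_cast; ring
        have k1 : (!![1,0,0,0; 0,1,0,0; 0,0,0,1; 0,0,1,0] : Matrix (Fin 4) (Fin 4) ℂ) * AA19 *
            !![1,0,0,0; 0,1,0,0; 0,0,0,1; 0,0,1,0] = -AA19 := by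
          rw [conj19a]
          ext r s
          fin_cases r <;> fin_cases s <;> simp [AA19, Matrix.vecHead, Matrix.vecTail]
        have k2 : (!![1,0,0,0; 0,0,0,1; 0,0,1,0; 0,1,0,0] : Matrix (Fin 4) (Fin 4) ℂ) * AA19 *
            !![1,0,0,0; 0,0,0,1; 0,0,1,0; 0,1,0,0] = -AA19 := by
          rw [conj19b]
          ext r s
          fin_cases r <;> fin_cases s <;> simp [AA19, Matrix.vecHead, Matrix.vecTail]
        rw [k1, k2, ← add_smul, hc, one_smul, neg_one_smul]
    rw [hspan]
    exact finrank_span_singleton hA0
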